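/- Every word in the commutation class of w arises as w(e) for some linear extension e of P(w); hence the number of words in the commutation class of w equals the number of linear extensions of P(w). -/

import Mathlib

def CommMove {S : Type*} (comm : S → S → Prop) (w w' : List S) : Prop :=
  ∃ (u v : List S) (a b : S), comm a b ∧ w = u ++ a :: b :: v ∧ w' = u ++ b :: a :: v

def CommClass {S : Type*} (comm : S → S → Prop) : List S → List S → Prop :=
  Relation.ReflTransGen (CommMove comm)

def WStep {S : Type*} (comm : S → S → Prop) (w : List S) (i j : Fin w.length) : Prop :=
  i ≤ j ∧ (w.get i = w.get j ∨ ¬ comm (w.get i) (w.get j))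

/-- The word-poset order `≤_w` on positions of `w`. -/
def WLe {S : Type*} (comm : S → S → Prop) (w : List S) : Fin w.length → Fin w.length → Prop :=
  Relation.TransGen (WStep comm w)

/-- A linear extension of the word poset `P(w)`. -/
def IsLinExt {S : Type*} (comm : S → S → Prop) (w : List S)
    (e : Fin w.length ≃ Fin w.length) : Prop :=
  ∀ i j, WLe comm w i j → e i ≤ e j

/-- The word `w(e)` associated to a linear extension `e`: `w(e)_i = w_{e⁻¹(i)}`. -/
def wordOf {S : Type*} (w : List S) (e : Fin w.length ≃ Fin w.length) : List S :=
  List.ofFn (fun i => w.get (e.symm i))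

section Aux
variable {S : Type*} {comm : S → S → Prop} {w : List S}

lemma wle_le {i j : Fin w.length} (h : WLe comm w i j) : i ≤ j := by
  induction h with
  | single h => exact h.1
  | tail _ h ih => exact le_trans ih h.1

lemma isLinExt_refl : IsLinExt comm w (Equiv.refl _) := fun _ _ h => wle_le h

lemma wordOf_refl : wordOf w (Equiv.refl _) = w := by
  simp [wordOf, List.ofFn_getElem]

@[simp] lemma wordOf_length (e : Fin w.length ≃ Fin w.length) :
    (wordOf w e).length = w.length := by simp [wordOf]

lemma wordOf_getElem (e : Fin w.length ≃ Fin w.length) (i : ℕ) (hi : i < (wordOf w e).length) :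
    (wordOf w e)[i] = w.get (e.symm ⟨i, by simpa using hi⟩) := by
  simp [wordOf]

lemma not_wle_of_comm {e : Fin w.length ≃ Fin w.length} (he : IsLinExt comm w e)
    {p q : Fin w.length} (hval : (e p).val + 1 = (e q).val)
    (hcomm : comm (w.get p) (w.get q)) (hne : w.get p ≠ w.get q) :
    ¬ WLe comm w p q := by
  intro h
  have hstep : ¬ WStep comm w p q := fun hs => hs.2.elim hne (fun h' => h' hcomm)
  have key : ∀ j, WLe comm w p j → (e j).val = (e p).val + 1 → False := by
    intro j hj
    induction hj with
    | @single b hs =>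
      intro hv
      have hb : b = q := e.injective (Fin.val_injective (by omega))
      subst hb
      exact hstep hs
    | @tail b c hpb hbc ih =>
      intro hv
      have h1 : e p ≤ e b := he _ _ hpb
      have h2 : e b ≤ e c := he _ _ (Relation.TransGen.single hbc)
      rw [Fin.le_def] at h1 h2
      rcases Nat.lt_or_ge (e b).val ((e p).val + 1) with hb | hb
      · have : b = p := e.injective (Fin.val_injective (by omega))
        subst this
        have hc : c = q := e.injective (Fin.val_injective (by omega))
        subst hc
        exact hstep hbc
      · exact ih (by omega)
  exact key q h (by omega)

lemma swap_val {n : ℕ} (k k1 z : Fin n) :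
    ((Equiv.swap k k1) z : Fin n).val =
      if z.val = k.val then k1.val else if z.val = k1.val then k.val else z.val := by
  rw [Equiv.swap_apply_def]
  split_ifs <;> simp_all [Fin.ext_iff]

lemma getElem_idx_congr (t : List S) {i j : ℕ} (h : i = j) (hi : i < t.length) :
    t[i]'hi = t[j]'(h ▸ hi) := by subst h; rfl

lemma getElem_take_cons_cons (l : List S) (k : ℕ) (hk : k + 1 < l.length) (x y : S)
    (i : ℕ) (hi : i < l.length)
    (hlen : i < (l.take k ++ x :: y :: l.drop (k+2)).length) :
    (l.take k ++ x :: y :: l.drop (k+2))[i] =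
      if i = k then x else if i = k+1 then y else l[i] := by
  have htk : (l.take k).length = k := by rw [List.length_take]; omega
  rcases Nat.lt_trichotomy i k with h | h | h
  · rw [List.getElem_append, dif_pos (by omega)]
    rw [List.getElem_take]
    rw [if_neg (by omega), if_neg (by omega)]
  · subst h
    rw [List.getElem_append, dif_neg (by omega), if_pos rfl]
    rw [getElem_idx_congr _ (by omega : i - (l.take i).length = 0)]
    rfl
  · rw [List.getElem_append, dif_neg (by omega), if_neg (by omega)]
    rcases Nat.lt_or_ge i (k+2) with h2 | h2
    · have hik : i = k + 1 := by omega
      subst hik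
      rw [getElem_idx_congr _ (by omega : k + 1 - (l.take k).length = 1)]
      rw [if_pos rfl]
      rfl
    · rw [if_neg (by omega)]
      rw [getElem_idx_congr _ (by omega : i - (l.take k).length = (i - (k+2)) + 1 + 1)]
      simp only [List.getElem_cons_succ]
      rw [List.getElem_drop]
      exact getElem_idx_congr l (show k+2 + (i-(k+2)) = i by omega) _

lemma take_cons_cons_length (l : List S) (k : ℕ) (hk : k + 1 < l.length) (x y : S) :
    (l.take k ++ x :: y :: l.drop (k+2)).length = l.length := by
  simp [List.length_take]
  omega

lemma isLinExt_swap {e : Fin w.length ≃ Fin w.length} (he : IsLinExt comm w e)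
    {k k1 : Fin w.length} (hk : (k : ℕ) + 1 = (k1 : ℕ))
    (hcomm : comm (w.get (e.symm k)) (w.get (e.symm k1)))
    (hne : w.get (e.symm k) ≠ w.get (e.symm k1)) :
    IsLinExt comm w (e.trans (Equiv.swap k k1)) := by
  intro i j hij
  have h1 : (e i).val ≤ (e j).val := he i j hij
  simp only [Equiv.trans_apply]
  have hexcl : ¬((e i).val = (k : ℕ) ∧ (e j).val = (k1 : ℕ)) := by
    rintro ⟨hik, hjk⟩
    have hi' : i = e.symm k := by
      rw [← Equiv.symm_apply_apply e i]; congr 1; exact Fin.val_injective hik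
    have hj' : j = e.symm k1 := by
      rw [← Equiv.symm_apply_apply e j]; congr 1; exact Fin.val_injective hjk
    subst hi'; subst hj'
    refine not_wle_of_comm he ?_ hcomm hne hij
    simp [hik, hjk, hk]
  rw [Fin.le_def, swap_val, swap_val]
  have hkn : (k1 : ℕ) < w.length := k1.isLt
  split_ifs <;> omega

lemma wordOf_trans_swap (e : Fin w.length ≃ Fin w.length) {k : ℕ} (hk : k + 1 < w.length) :
    wordOf w (e.trans (Equiv.swap ⟨k, by omega⟩ ⟨k+1, hk⟩)) =
      (wordOf w e).take k ++
        ((wordOf w e)[k+1]'(by simpa using hk)) ::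
        ((wordOf w e)[k]'(by simp; omega)) :: (wordOf w e).drop (k+2) := by
  have hlw : (wordOf w e).length = w.length := wordOf_length e
  apply List.ext_getElem
  · rw [wordOf_length, take_cons_cons_length _ _ (by omega)]
    exact hlw.symm
  · intro i h1 h2
    have hi : i < w.length := by rwa [wordOf_length] at h1
    rw [getElem_take_cons_cons _ _ (by rw [wordOf_length]; omega) _ _ _ (by rw [wordOf_length]; omega)]
    rw [wordOf_getElem]
    have hsymm : (e.trans (Equiv.swap ⟨k, by omega⟩ ⟨k+1, hk⟩)).symm
        = (Equiv.swap ⟨k, by omega⟩ ⟨k+1, hk⟩).trans e.symm := by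
      ext z
      simp [Equiv.symm_trans_apply, Equiv.symm_swap]
    rw [hsymm]
    simp only [Equiv.trans_apply]
    split_ifs with hc1 hc2
    · subst hc1
      rw [Equiv.swap_apply_left]
      exact (wordOf_getElem e (i+1) (by rw [wordOf_length]; omega)).symm
    · subst hc2
      rw [Equiv.swap_apply_right]
      exact (wordOf_getElem e k (by rw [wordOf_length]; omega)).symm
    · rw [Equiv.swap_apply_of_ne_of_ne (by simp [Fin.ext_iff]; omega) (by simp [Fin.ext_iff]; omega)]
      exact (wordOf_getElem e i (by rw [wordOf_length]; omega)).symm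

lemma eq_take_cons_cons (l : List S) (k : ℕ) (hk : k + 1 < l.length) :
    l = l.take k ++ (l[k]'(by omega)) :: (l[k+1]'hk) :: l.drop (k+2) := by
  apply List.ext_getElem
  · rw [take_cons_cons_length _ _ hk]
  · intro i h1 h2
    rw [getElem_take_cons_cons _ _ hk _ _ _ h1]
    split_ifs with c1 c2
    · subst c1; rfl
    · subst c2; rfl
    · rfl

lemma wordOf_injective {e e' : Fin w.length ≃ Fin w.length} (he : IsLinExt comm w e)
    (he' : IsLinExt comm w e') (h : wordOf w e = wordOf w e') : e = e' := by
  have key : ∀ m : ℕ, ∀ k : Fin w.length, (k : ℕ) = m → e.symm k = e'.symm k := by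
    intro m
    induction m using Nat.strong_induction_on with
    | _ m ih =>
    intro k hk
    by_contra hne
    have hl : w.get (e.symm k) = w.get (e'.symm k) := by
      have h1 := wordOf_getElem e k.val (by simp)
      have h2 := wordOf_getElem e' k.val (by simp)
      have h0 : (wordOf w e)[(k : ℕ)]'(by simp) = (wordOf w e')[(k : ℕ)]'(by simp) := by
        simp only [h]
      have := h1.symm.trans (h0.trans h2)
      simpa using this
    rcases lt_or_gt_of_ne hne with hlt | hlt
    · have hws : WStep comm w (e.symm k) (e'.symm k) := ⟨le_of_lt hlt, Or.inl hl⟩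
      have h1 : e' (e.symm k) ≤ e' (e'.symm k) := he' _ _ (Relation.TransGen.single hws)
      rw [Equiv.apply_symm_apply] at h1
      have h2 : e' (e.symm k) ≠ k := fun hc =>
        hne ((e'.symm_apply_apply (e.symm k)).symm.trans (congrArg e'.symm hc))
      have h3 : (e' (e.symm k)).val < m := by
        rw [Fin.le_def] at h1
        have := Fin.val_ne_iff.mpr h2
        omega
      have h4 := ih _ h3 (e' (e.symm k)) rfl
      rw [Equiv.symm_apply_apply] at h4
      exact h2 (e.symm.injective h4)
    · have hws : WStep comm w (e'.symm k) (e.symm k) := ⟨le_of_lt hlt, Or.inl hl.symm⟩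
      have h1 : e (e'.symm k) ≤ e (e.symm k) := he _ _ (Relation.TransGen.single hws)
      rw [Equiv.apply_symm_apply] at h1
      have h2 : e (e'.symm k) ≠ k := fun hc =>
        hne ((e.symm_apply_apply (e'.symm k)).symm.trans (congrArg e.symm hc)).symm
      have h3 : (e (e'.symm k)).val < m := by
        rw [Fin.le_def] at h1
        have := Fin.val_ne_iff.mpr h2
        omega
      have h4 := ih _ h3 (e (e'.symm k)) rfl
      rw [Equiv.symm_apply_apply] at h4
      exact h2 (e'.symm.injective h4.symm)
  have hsymm : e.symm = e'.symm := Equiv.ext fun k => key k.val k rfl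
  rw [← e.symm_symm, hsymm, e'.symm_symm]

lemma strictMono_of_adj {n : ℕ} {α : Type*} [Preorder α] {f : Fin n → α}
    (h : ∀ k (hk : k + 1 < n), f ⟨k, by omega⟩ < f ⟨k+1, hk⟩) : StrictMono f := by
  intro i j hij
  obtain ⟨j, hj⟩ := j
  induction j with
  | zero => exact absurd hij (by simp [Fin.lt_def])
  | succ m ihm =>
    have him : i.val < m + 1 := hij
    rcases Nat.lt_or_ge i.val m with h1 | h1
    · have hm : m < n := by omega
      exact lt_trans (ihm hm (by simpa [Fin.lt_def] using h1)) (h m hj)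
    · have hi : i = ⟨m, by omega⟩ := Fin.ext (by show i.val = m; omega)
      rw [hi]
      exact h m hj

def invCnt {n : ℕ} (e : Fin n ≃ Fin n) : ℕ :=
  (Finset.univ.filter (fun x : Fin n × Fin n => x.1 < x.2 ∧ e x.2 < e x.1)).card

lemma commClass_wordOf (hsym : ∀ a b, comm a b → comm b a)
    {e : Fin w.length ≃ Fin w.length} (he : IsLinExt comm w e) :
    CommClass comm w (wordOf w e) := by
  suffices H : ∀ N (e : Fin w.length ≃ Fin w.length), invCnt e = N → IsLinExt comm w e →
      CommClass comm w (wordOf w e) from H _ e rfl he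
  intro N
  induction N using Nat.strong_induction_on with
  | _ N ih =>
  intro e hN he
  by_cases hd : ∃ k, ∃ (hk : k + 1 < w.length),
      e.symm ⟨k+1, hk⟩ < e.symm ⟨k, Nat.lt_of_succ_lt hk⟩
  · obtain ⟨k, hk, hdesc⟩ := hd
    have hqp : e.symm ⟨k+1, hk⟩ < e.symm ⟨k, Nat.lt_of_succ_lt hk⟩ := hdesc
    have hek : e (e.symm ⟨k, Nat.lt_of_succ_lt hk⟩) = ⟨k, Nat.lt_of_succ_lt hk⟩ :=
      e.apply_symm_apply _
    have hek1 : e (e.symm ⟨k+1, hk⟩) = ⟨k+1, hk⟩ := e.apply_symm_apply _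
    have hnstep : ¬ WStep comm w (e.symm ⟨k+1, hk⟩) (e.symm ⟨k, Nat.lt_of_succ_lt hk⟩) := by
      intro hs
      have h1 := he _ _ (Relation.TransGen.single hs)
      rw [hek, hek1] at h1
      exact absurd h1 (by simp [Fin.le_def])
    have hne' : w.get (e.symm ⟨k+1, hk⟩) ≠ w.get (e.symm ⟨k, Nat.lt_of_succ_lt hk⟩) :=
      fun h => hnstep ⟨le_of_lt hqp, Or.inl h⟩
    have hcomm' : comm (w.get (e.symm ⟨k+1, hk⟩)) (w.get (e.symm ⟨k, Nat.lt_of_succ_lt hk⟩)) := by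
      by_contra hc
      exact hnstep ⟨le_of_lt hqp, Or.inr hc⟩
    have hle' : IsLinExt comm w (e.trans (Equiv.swap ⟨k, Nat.lt_of_succ_lt hk⟩ ⟨k+1, hk⟩)) :=
      isLinExt_swap he rfl (hsym _ _ hcomm') (Ne.symm hne')
    have hword := wordOf_trans_swap e hk
    have hdec : invCnt (e.trans (Equiv.swap ⟨k, Nat.lt_of_succ_lt hk⟩ ⟨k+1, hk⟩)) < invCnt e := by
      have hmem : ((e.symm ⟨k+1, hk⟩ : Fin w.length), (e.symm ⟨k, Nat.lt_of_succ_lt hk⟩ : Fin w.length)) ∈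
          Finset.univ.filter (fun x : Fin w.length × Fin w.length => x.1 < x.2 ∧ e x.2 < e x.1) := by
        simp only [Finset.mem_filter, Finset.mem_univ, true_and]
        refine ⟨hqp, ?_⟩
        rw [hek, hek1]
        simp [Fin.lt_def]
      have hsub : Finset.univ.filter (fun x : Fin w.length × Fin w.length => x.1 < x.2 ∧
            (e.trans (Equiv.swap ⟨k, Nat.lt_of_succ_lt hk⟩ ⟨k+1, hk⟩)) x.2 <
            (e.trans (Equiv.swap ⟨k, Nat.lt_of_succ_lt hk⟩ ⟨k+1, hk⟩)) x.1) ⊆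
          (Finset.univ.filter (fun x : Fin w.length × Fin w.length =>
            x.1 < x.2 ∧ e x.2 < e x.1)).erase
            ((e.symm ⟨k+1, hk⟩ : Fin w.length), (e.symm ⟨k, Nat.lt_of_succ_lt hk⟩ : Fin w.length)) := by
        rintro ⟨i, j⟩ hx
        rw [Finset.mem_filter] at hx
        simp only [Finset.mem_filter, Finset.mem_univ, true_and, Equiv.trans_apply] at hx
        obtain ⟨hij, hlt⟩ := hx
        have hexcl : ¬((e i).val = k ∧ (e j).val = k + 1) := by
          rintro ⟨h1, h2⟩
          have hi' : i = e.symm ⟨k, Nat.lt_of_succ_lt hk⟩ := by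
            rw [← Equiv.symm_apply_apply e i]
            congr 1
            exact Fin.val_injective h1
          have hj' : j = e.symm ⟨k+1, hk⟩ := by
            rw [← Equiv.symm_apply_apply e j]
            congr 1
            exact Fin.val_injective h2
          rw [hi', hj'] at hij
          exact absurd hij (not_lt.mpr (le_of_lt hqp))
        have hlt2 : (if (e j).val = k then k+1 else if (e j).val = k+1 then k else (e j).val) <
            (if (e i).val = k then k+1 else if (e i).val = k+1 then k else (e i).val) := by
          have h0 := hlt
          rw [Fin.lt_def, swap_val, swap_val] at h0
          exact h0
        rw [Finset.mem_erase]
        constructor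
        · intro heq
          rw [Prod.ext_iff] at heq
          obtain ⟨h1, h2⟩ := heq
          dsimp only at h1 h2
          have hiv : (e i).val = k + 1 := by rw [h1, hek1]
          have hjv : (e j).val = k := by rw [h2, hek]
          rw [hiv, hjv] at hlt2
          simp at hlt2
        · simp only [Finset.mem_filter, Finset.mem_univ, true_and]
          refine ⟨hij, ?_⟩
          rw [Fin.lt_def]
          split_ifs at hlt2 <;> omega
      calc invCnt (e.trans (Equiv.swap ⟨k, Nat.lt_of_succ_lt hk⟩ ⟨k+1, hk⟩))
          ≤ ((Finset.univ.filter (fun x : Fin w.length × Fin w.length =>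
              x.1 < x.2 ∧ e x.2 < e x.1)).erase
              ((e.symm ⟨k+1, hk⟩ : Fin w.length),
               (e.symm ⟨k, Nat.lt_of_succ_lt hk⟩ : Fin w.length))).card :=
            Finset.card_le_card hsub
        _ < invCnt e := Finset.card_erase_lt_of_mem hmem
    have hclass' := ih _ (hN ▸ hdec) _ rfl hle'
    rw [hword] at hclass'
    refine Relation.ReflTransGen.tail hclass' ?_
    refine ⟨(wordOf w e).take k, (wordOf w e).drop (k+2),
      (wordOf w e)[k+1]'(by rw [wordOf_length]; omega),
      (wordOf w e)[k]'(by rw [wordOf_length]; omega), ?_, rfl, ?_⟩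
    · rw [wordOf_getElem e (k+1) (by rw [wordOf_length]; omega),
        wordOf_getElem e k (by rw [wordOf_length]; omega)]
      exact hcomm'
    · exact eq_take_cons_cons _ _ (by rw [wordOf_length]; omega)
  · push_neg at hd
    have hadj : ∀ m (hm : m + 1 < w.length),
        e.symm ⟨m, Nat.lt_of_succ_lt hm⟩ < e.symm ⟨m+1, hm⟩ := by
      intro m hm
      have h1 := hd m hm
      have h2 : e.symm ⟨m, Nat.lt_of_succ_lt hm⟩ ≠ e.symm ⟨m+1, hm⟩ := by
        intro hc
        have := e.symm.injective hc
        simp [Fin.ext_iff] at this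
      exact lt_of_le_of_ne h1 h2
    have hmono : StrictMono e.symm := strictMono_of_adj (fun m hm => hadj m hm)
    have hid : (e.symm : Fin w.length → Fin w.length) = id :=
      (StrictMono.range_inj hmono strictMono_id).mp
        (by rw [e.symm.surjective.range_eq, Set.range_id])
    have heq : e = Equiv.refl (Fin w.length) := by
      apply Equiv.ext
      intro i
      have := congrFun hid (e i)
      simp only [id_eq, Equiv.symm_apply_apply] at this
      simp [← this]
    rw [heq, wordOf_refl]
    exact Relation.ReflTransGen.refl

lemma exists_step {e : Fin w.length ≃ Fin w.length} (he : IsLinExt comm w e)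
    {u v : List S} {a b : S} (hab : comm a b) (hne : a ≠ b)
    (hw : wordOf w e = u ++ a :: b :: v) :
    ∃ e', IsLinExt comm w e' ∧ wordOf w e' = u ++ b :: a :: v := by
  have hlen : u.length + 1 < w.length := by
    have h0 := congrArg List.length hw
    rw [wordOf_length] at h0
    simp at h0
    omega
  have hgen : ∀ (L : List S), L = u ++ a :: b :: v →
      ∀ (h1 : u.length < L.length) (h2 : u.length + 1 < L.length),
      L[u.length] = a ∧ L[u.length + 1] = b := by
    rintro L rfl h1 h2
    constructor
    · rw [List.getElem_append, dif_neg (by omega)]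
      rw [getElem_idx_congr _ (by omega : u.length - u.length = 0)]
      rfl
    · rw [List.getElem_append, dif_neg (by omega)]
      rw [getElem_idx_congr _ (by omega : u.length + 1 - u.length = 1)]
      rfl
  obtain ⟨hka, hkb⟩ := hgen (wordOf w e) hw (by rw [wordOf_length]; omega)
    (by rw [wordOf_length]; omega)
  have ha : w.get (e.symm ⟨u.length, Nat.lt_of_succ_lt hlen⟩) = a := by
    rw [← hka, wordOf_getElem]
  have hb : w.get (e.symm ⟨u.length + 1, hlen⟩) = b := by
    rw [← hkb, wordOf_getElem]
  refine ⟨e.trans (Equiv.swap ⟨u.length, Nat.lt_of_succ_lt hlen⟩ ⟨u.length + 1, hlen⟩), ?_, ?_⟩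
  · refine isLinExt_swap he rfl ?_ ?_
    · rw [ha, hb]; exact hab
    · rw [ha, hb]; exact hne
  · have htake : (wordOf w e).take u.length = u := by
      rw [hw]; exact List.take_left' rfl
    have hdrop : (wordOf w e).drop (u.length + 2) = v := by
      have h2 : u ++ a :: b :: v = (u ++ [a, b]) ++ v := (List.append_assoc u [a, b] v).symm
      rw [hw, h2]
      exact List.drop_left' (by simp)
    rw [wordOf_trans_swap e hlen, hka, hkb, htake, hdrop]

end Aux

theorem wordOf_surjective_and_card {S : Type*} (comm : S → S → Prop)
    (hsym : ∀ a b, comm a b → comm b a) (hirr : ∀ a, ¬ comm a a) (w : List S) :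
    (∀ w', CommClass comm w w' →
      ∃ e : Fin w.length ≃ Fin w.length, IsLinExt comm w e ∧ wordOf w e = w') ∧
    Nat.card {w' : List S // CommClass comm w w'} =
      Nat.card {e : Fin w.length ≃ Fin w.length // IsLinExt comm w e} := by
  have hsurj : ∀ w', CommClass comm w w' →
      ∃ e : Fin w.length ≃ Fin w.length, IsLinExt comm w e ∧ wordOf w e = w' := by
    intro w' hw'
    induction hw' with
    | refl => exact ⟨Equiv.refl _, isLinExt_refl, wordOf_refl⟩
    | tail hsub hmove ih =>
      obtain ⟨e, he, hwe⟩ := ih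
      obtain ⟨u, v, a, b, hab, h1, h2⟩ := hmove
      have hne : a ≠ b := fun h => hirr b (h ▸ hab)
      obtain ⟨e', he', hwe'⟩ := exists_step he hab hne (hwe.trans h1)
      exact ⟨e', he', hwe'.trans h2.symm⟩
  refine ⟨hsurj, ?_⟩
  have hbij : Function.Bijective
      (fun e : {e : Fin w.length ≃ Fin w.length // IsLinExt comm w e} =>
      (⟨wordOf w e.1, commClass_wordOf hsym e.2⟩ : {w' : List S // CommClass comm w w'})) := by
    constructor
    · rintro ⟨e, he⟩ ⟨e', he'⟩ h
      simp only [Subtype.mk.injEq] at h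
      exact Subtype.ext (wordOf_injective he he' h)
    · rintro ⟨w', hw'⟩
      obtain ⟨e, he, hwe⟩ := hsurj w' hw'
      exact ⟨⟨e, he⟩, Subtype.ext hwe⟩
  exact (Nat.card_eq_of_bijective _ hbij).symm
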